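/- Let n > m ≥ 1 be integers, k = n - m, and let λ, μ be k-strict partitions with m parts each, with all parts at most n+k. Define f(λ,j) = j - 1 - #{i < j : λ_i + λ_j ≤ 2k + j - i}. If |λ| + |μ| < 2n, then for all j ∈ [1,m], f(λ, m+1-j) + f(μ, j) ≤ n + k - λ_{m+1-j} - μ_j. -/

import Mathlib

/-- `f(λ,j) = j - 1 - #{i : 1 ≤ i < j, λ_i + λ_j ≤ 2k + j - i}`, the number of "big"
pairs `(i,j)` with `i < j` (odd orthogonal case, where `2k = N - 2m - 1`). -/
def fCount (k : ℕ) (lam : ℕ → ℕ) (j : ℕ) : ℕ :=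
  j - 1 - ((Finset.Ico 1 j).filter fun i => lam i + lam j ≤ 2 * k + j - i).card

private lemma descend_aux (S : Finset ℕ) (h : ∀ i ∈ S, 2 ≤ i → i - 1 ∈ S) :
    ∀ d s, s ∈ S → 1 ≤ s - d → s - d ∈ S := by
  intro d
  induction d with
  | zero => intro s hs _; simpa using hs
  | succ d ih =>
    intro s hs hge
    have h1 : 1 ≤ s - d := by omega
    have h2 := ih s hs h1
    have h3 : 2 ≤ s - d := by omega
    have h4 := h _ h2 h3
    have : s - (d + 1) = s - d - 1 := by omega
    rw [this]
    exact h4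

private lemma mem_of_card_le (S : Finset ℕ) (h : ∀ i ∈ S, 2 ≤ i → i - 1 ∈ S)
    (h1 : ∀ i ∈ S, 1 ≤ i) (t : ℕ) (ht1 : 1 ≤ t) (ht : t ≤ S.card) : t ∈ S := by
  by_contra hts
  have hsub : S ⊆ Finset.Ico 1 t := by
    intro s hs
    simp only [Finset.mem_Ico]
    refine ⟨h1 s hs, ?_⟩
    by_contra hlt
    push_neg at hlt
    have hmem : s - (s - t) ∈ S := descend_aux S h (s - t) s hs (by omega)
    rw [show s - (s - t) = t from by omega] at hmem
    exact hts hmem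
  have hcard := Finset.card_le_card hsub
  rw [Nat.card_Ico] at hcard
  omega

/-- Combinatorial facts about `fCount` for a k-strict partition. -/
private lemma side_facts (k m J : ℕ) (lam : ℕ → ℕ) (hJ1 : 1 ≤ J) (hJm : J ≤ m)
    (hdec : ∀ i j, 1 ≤ i → i ≤ j → j ≤ m → lam j ≤ lam i)
    (hstrict : ∀ j, 1 ≤ j → j < m → k < lam j → lam (j + 1) < lam j) :
    fCount k lam J + 1 ≤ J ∧
    (fCount k lam J = 0 ∨ (lam J ≤ lam (fCount k lam J) ∧
        2 * k + J + 1 ≤ lam (fCount k lam J) + lam J + fCount k lam J)) ∧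
    fCount k lam J * lam (fCount k lam J) + (J - fCount k lam J) * lam J
      ≤ ∑ i ∈ Finset.Icc 1 m, lam i := by
  classical
  set bigs := (Finset.Ico 1 J).filter (fun i => ¬ (lam i + lam J ≤ 2 * k + J - i)) with hbigs
  have hcardsum : ((Finset.Ico 1 J).filter fun i => lam i + lam J ≤ 2 * k + J - i).card
      + bigs.card = J - 1 := by
    rw [hbigs]
    have h := Finset.card_filter_add_card_filter_not
      (s := Finset.Ico 1 J) (p := fun i => lam i + lam J ≤ 2 * k + J - i)
    rw [Nat.card_Ico] at h
    simpa using h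
  have hsmall : ((Finset.Ico 1 J).filter fun i => lam i + lam J ≤ 2 * k + J - i).card
      ≤ J - 1 := by
    have := Finset.card_filter_le (Finset.Ico 1 J)
      (fun i => lam i + lam J ≤ 2 * k + J - i)
    rwa [Nat.card_Ico] at this
  have hcard : fCount k lam J = bigs.card := by
    unfold fCount
    omega
  set F := fCount k lam J with hFdef
  have hFle : F + 1 ≤ J := by
    have : bigs.card ≤ J - 1 := by
      have := Finset.card_filter_le (Finset.Ico 1 J)
        (fun i => ¬ (lam i + lam J ≤ 2 * k + J - i))
      rwa [Nat.card_Ico] at this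
    omega
  -- downward closure of the big set
  have hdc : ∀ i ∈ bigs, 2 ≤ i → i - 1 ∈ bigs := by
    intro i hi h2
    simp only [hbigs, Finset.mem_filter, Finset.mem_Ico, not_le] at hi ⊢
    obtain ⟨⟨hi1, hiJ⟩, hbig⟩ := hi
    have hklam : k < lam (i - 1) := by
      by_contra hle
      push_neg at hle
      have ha : lam i ≤ lam (i - 1) := hdec (i - 1) i (by omega) (by omega) (by omega)
      have hb : lam J ≤ lam i := hdec i J (by omega) (by omega) hJm
      omega
    have hstep := hstrict (i - 1) (by omega) (by omega) hklam
    rw [show i - 1 + 1 = i from by omega] at hstep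
    exact ⟨⟨by omega, by omega⟩, by omega⟩
  have h1mem : ∀ i ∈ bigs, 1 ≤ i := by
    intro i hi
    simp only [hbigs, Finset.mem_filter, Finset.mem_Ico] at hi
    omega
  have hbigfact : F = 0 ∨ (lam J ≤ lam F ∧ 2 * k + J + 1 ≤ lam F + lam J + F) := by
    rcases Nat.eq_zero_or_pos F with h0 | h1
    · exact Or.inl h0
    · right
      have hmem : F ∈ bigs := mem_of_card_le bigs hdc h1mem F h1 (by omega)
      simp only [hbigs, Finset.mem_filter, Finset.mem_Ico, not_le] at hmem
      obtain ⟨⟨_, hFJ⟩, hbig⟩ := hmem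
      exact ⟨hdec F J h1 (by omega) hJm, by omega⟩
  refine ⟨hFle, hbigfact, ?_⟩
  -- sum lower bound
  have hs1 : ∑ i ∈ Finset.Icc 1 J, lam i ≤ ∑ i ∈ Finset.Icc 1 m, lam i :=
    Finset.sum_le_sum_of_subset (Finset.Icc_subset_Icc_right hJm)
  have hIccIoc : Finset.Icc 1 J = Finset.Ioc 0 J := by
    rw [← Finset.Icc_add_one_left_eq_Ioc]; rfl
  have hsplit : (∑ i ∈ Finset.Ioc 0 F, lam i) + ∑ i ∈ Finset.Ioc F J, lam i
      = ∑ i ∈ Finset.Ioc 0 J, lam i :=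
    Finset.sum_Ioc_consecutive _ (Nat.zero_le F) (by omega)
  have hb1 : F * lam F ≤ ∑ i ∈ Finset.Ioc 0 F, lam i := by
    have h := Finset.card_nsmul_le_sum (Finset.Ioc 0 F) lam (lam F)
      (fun i hi => by
        rw [Finset.mem_Ioc] at hi
        exact hdec i F (by omega) hi.2 (by omega))
    rwa [Nat.card_Ioc, Nat.sub_zero, smul_eq_mul] at h
  have hb2 : (J - F) * lam J ≤ ∑ i ∈ Finset.Ioc F J, lam i := by
    have h := Finset.card_nsmul_le_sum (Finset.Ioc F J) lam (lam J)
      (fun i hi => by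
        rw [Finset.mem_Ioc] at hi
        exact hdec i J (by omega) hi.2 hJm)
    rwa [Nat.card_Ioc, smul_eq_mul] at h
  calc F * lam F + (J - F) * lam J
      ≤ (∑ i ∈ Finset.Ioc 0 F, lam i) + ∑ i ∈ Finset.Ioc F J, lam i :=
        Nat.add_le_add hb1 hb2
    _ = ∑ i ∈ Finset.Icc 1 J, lam i := by rw [hsplit, hIccIoc]
    _ ≤ ∑ i ∈ Finset.Icc 1 m, lam i := hs1

/-- One-sided arithmetic estimate. -/
private lemma side_arith (k J F A LF : ℤ) (hk : 1 ≤ k) (hJ1 : 1 ≤ J)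
    (hF0 : 0 ≤ F) (hFJ : F ≤ J - 1) (hA : 0 ≤ A)
    (hL : F = 0 ∨ (A ≤ LF ∧ 2 * k + J + 1 ≤ LF + A + F))
    (hpos : 1 ≤ F + A) :
    F + A + J - 1 ≤ F * LF + (J - F) * A := by
  rcases eq_or_lt_of_le hF0 with hF0' | hF1
  · have hA1 : 1 ≤ A := by omega
    have : F = 0 := hF0'.symm
    subst this
    nlinarith [mul_nonneg (show (0:ℤ) ≤ J - 1 by linarith) (show (0:ℤ) ≤ A - 1 by linarith)]
  · rcases hL with h0 | ⟨hALF, hbig⟩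
    · omega
    · by_cases hA2 : 2 ≤ A
      · nlinarith [mul_le_mul_of_nonneg_left hALF (le_of_lt hF1),
          mul_nonneg (le_of_lt hF1) (show (0:ℤ) ≤ A - 2 by linarith),
          mul_nonneg (show (0:ℤ) ≤ J - 1 - F by linarith) (show (0:ℤ) ≤ A - 1 by linarith)]
      · have hLF' : 2 * k + J + 1 - F - A ≤ LF := by linarith
        have h1 : F * (2 * k + J + 1 - F - A) ≤ F * LF :=
          mul_le_mul_of_nonneg_left hLF' (le_of_lt hF1)
        have hcases : A = 0 ∨ A = 1 := by omega
        have hprod : (0:ℤ) ≤ (F - 1) * (J - 1 - F) :=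
          mul_nonneg (by linarith) (by linarith)
        have hkF : (0:ℤ) ≤ F * (k - 1) := mul_nonneg (by linarith) (by linarith)
        rcases hcases with h | h <;> subst h <;> nlinarith [h1, hprod, hkF]

/-- The key integer inequality. -/
private lemma key_arith (m k j J F G A B LF GM SL SM : ℤ)
    (hm : 1 ≤ m) (hk : 1 ≤ k) (hj1 : 1 ≤ j) (hjm : j ≤ m) (hJ : J = m + 1 - j)
    (hF0 : 0 ≤ F) (hFJ : F ≤ J - 1) (hG0 : 0 ≤ G) (hGj : G ≤ j - 1)
    (hA0 : 0 ≤ A) (hAc : A ≤ m + 2 * k) (hB0 : 0 ≤ B) (hBc : B ≤ m + 2 * k)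
    (hL : F = 0 ∨ (A ≤ LF ∧ 2 * k + J + 1 ≤ LF + A + F))
    (hM : G = 0 ∨ (B ≤ GM ∧ 2 * k + j + 1 ≤ GM + B + G))
    (hSL : F * LF + (J - F) * A ≤ SL)
    (hSM : G * GM + (j - G) * B ≤ SM)
    (hS : SL + SM ≤ 2 * m + 2 * k - 1)
    (hcon : m + 2 * k + 1 ≤ F + G + A + B) : False := by
  have hJ1 : (1:ℤ) ≤ J := by omega
  have hSL0 : 0 ≤ F * LF + (J - F) * A := by
    rcases hL with h0 | ⟨hALF, _⟩
    · rw [h0]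
      have h := mul_nonneg (show (0:ℤ) ≤ J - 0 by linarith) hA0
      linarith
    · have : 0 ≤ LF := le_trans hA0 hALF
      have h1 : 0 ≤ F * LF := mul_nonneg hF0 this
      have h2 : 0 ≤ (J - F) * A := mul_nonneg (by linarith) hA0
      linarith
  have hSM0 : 0 ≤ G * GM + (j - G) * B := by
    rcases hM with h0 | ⟨hBGM, _⟩
    · rw [h0]
      have h := mul_nonneg (show (0:ℤ) ≤ j - 0 by linarith) hB0
      linarith
    · have : 0 ≤ GM := le_trans hB0 hBGM
      have h1 : 0 ≤ G * GM := mul_nonneg hG0 this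
      have h2 : 0 ≤ (j - G) * B := mul_nonneg (by linarith) hB0
      linarith
  by_cases hFA : 1 ≤ F + A
  · by_cases hGB : 1 ≤ G + B
    · have s1 := side_arith k J F A LF hk hJ1 hF0 hFJ hA0 hL hFA
      have s2 := side_arith k j G B GM hk (by omega) hG0 hGj hB0 hM hGB
      linarith
    · -- G = 0, B = 0
      have hG : G = 0 := by omega
      have hB : B = 0 := by omega
      have hAge : m + 2 * k + 2 - J ≤ A := by omega
      have hJ2 : 2 ≤ J := by omega
      -- SL ≥ J * A ≥ J*(m+2k+2-J) ≥ 2m+2k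
      have hJA : J * A ≤ F * LF + (J - F) * A := by
        rcases hL with h0 | ⟨hALF, _⟩
        · rw [h0]; ring_nf; linarith
        · nlinarith [mul_nonneg hF0 (show (0:ℤ) ≤ LF - A by linarith)]
      have h2 : J * (m + 2 * k + 2 - J) ≤ J * A :=
        mul_le_mul_of_nonneg_left hAge (by linarith)
      have h3 : 2 * m + 2 * k ≤ J * (m + 2 * k + 2 - J) := by
        nlinarith [mul_nonneg (show (0:ℤ) ≤ J - 2 by linarith)
            (show (0:ℤ) ≤ m - J by omega),
          mul_nonneg (show (0:ℤ) ≤ 2 * k by linarith) (show (0:ℤ) ≤ J - 1 by linarith)]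
      linarith
  · -- F = 0, A = 0
    have hF : F = 0 := by omega
    have hA : A = 0 := by omega
    have hBge : m + 2 * k + 2 - j ≤ B := by omega
    have hj2 : 2 ≤ j := by omega
    have hjB : j * B ≤ G * GM + (j - G) * B := by
      rcases hM with h0 | ⟨hBGM, _⟩
      · rw [h0]; ring_nf; linarith
      · nlinarith [mul_nonneg hG0 (show (0:ℤ) ≤ GM - B by linarith)]
    have h2 : j * (m + 2 * k + 2 - j) ≤ j * B :=
      mul_le_mul_of_nonneg_left hBge (by linarith)
    have h3 : 2 * m + 2 * k ≤ j * (m + 2 * k + 2 - j) := by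
      nlinarith [mul_nonneg (show (0:ℤ) ≤ j - 2 by linarith)
          (show (0:ℤ) ≤ m - j by omega),
        mul_nonneg (show (0:ℤ) ≤ 2 * k by linarith) (show (0:ℤ) ≤ j - 1 by linarith)]
    linarith

/-- Let `n > m ≥ 1`, `k = n - m`, and let `λ, μ` be `k`-strict partitions with `m` parts,
all parts at most `n + k`.  If `|λ| + |μ| < 2n`, then for all `1 ≤ j ≤ m`,
`f(λ, m+1-j) + f(μ, j) ≤ n + k - λ_{m+1-j} - μ_j`. -/
theorem stmt_3 (n m k : ℕ) (hm : 1 ≤ m) (hmn : m < n) (hk : k = n - m)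
    (lam mu : ℕ → ℕ)
    (hlamtop : lam 1 ≤ n + k) (hmutop : mu 1 ≤ n + k)
    (hlamdec : ∀ i j, 1 ≤ i → i ≤ j → j ≤ m → lam j ≤ lam i)
    (hmudec : ∀ i j, 1 ≤ i → i ≤ j → j ≤ m → mu j ≤ mu i)
    (hlamstrict : ∀ j, 1 ≤ j → j < m → k < lam j → lam (j + 1) < lam j)
    (hmustrict : ∀ j, 1 ≤ j → j < m → k < mu j → mu (j + 1) < mu j)
    (hsum : (∑ i ∈ Finset.Icc 1 m, lam i) + (∑ i ∈ Finset.Icc 1 m, mu i) < 2 * n) :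
    ∀ j, 1 ≤ j → j ≤ m →
      fCount k lam (m + 1 - j) + fCount k mu j + lam (m + 1 - j) + mu j ≤ n + k := by
  have hn : n = m + k := by omega
  have hk1 : 1 ≤ k := by omega
  intro j hj1 hjm
  set J := m + 1 - j with hJdef
  have hJ1 : 1 ≤ J := by omega
  have hJm : J ≤ m := by omega
  obtain ⟨hFle, hLbig, hSL⟩ := side_facts k m J lam hJ1 hJm hlamdec hlamstrict
  obtain ⟨hGle, hMbig, hSM⟩ := side_facts k m j mu hj1 hjm hmudec hmustrict
  set F := fCount k lam J with hFdef
  set G := fCount k mu j with hGdef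
  have hAc : lam J ≤ n + k := le_trans (hlamdec 1 J le_rfl hJ1 hJm) hlamtop
  have hBc : mu j ≤ n + k := le_trans (hmudec 1 j le_rfl hj1 hjm) hmutop
  by_contra hcon
  push_neg at hcon
  have hsumz : (∑ i ∈ Finset.Icc 1 m, ((lam i : ℤ))) + (∑ i ∈ Finset.Icc 1 m, ((mu i : ℤ)))
      ≤ 2 * (m : ℤ) + 2 * (k : ℤ) - 1 := by
    have h : ((∑ i ∈ Finset.Icc 1 m, lam i : ℕ) : ℤ)
        + ((∑ i ∈ Finset.Icc 1 m, mu i : ℕ) : ℤ) < 2 * (n : ℕ) := by exact_mod_cast hsum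
    push_cast at h
    have hn' : (n : ℤ) = (m : ℤ) + (k : ℤ) := by exact_mod_cast hn
    linarith
  -- move to ℤ
  have hFJz : F ≤ J := by omega
  have hGjz : G ≤ j := by omega
  have hSLz : (F : ℤ) * (lam F) + ((J : ℤ) - F) * (lam J)
      ≤ ∑ i ∈ Finset.Icc 1 m, ((lam i : ℤ)) := by
    zify [hFJz] at hSL
    exact hSL
  have hSMz : (G : ℤ) * (mu G) + ((j : ℤ) - G) * (mu j)
      ≤ ∑ i ∈ Finset.Icc 1 m, ((mu i : ℤ)) := by
    zify [hGjz] at hSM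
    exact hSM
  have hLz : (F : ℤ) = 0 ∨ ((lam J : ℤ) ≤ (lam F : ℤ) ∧
      2 * (k : ℤ) + (J : ℤ) + 1 ≤ (lam F : ℤ) + (lam J : ℤ) + F) := by
    rcases hLbig with h0 | ⟨h1, h2⟩
    · left; exact_mod_cast h0
    · right; exact ⟨by exact_mod_cast h1, by exact_mod_cast h2⟩
  have hMz : (G : ℤ) = 0 ∨ ((mu j : ℤ) ≤ (mu G : ℤ) ∧
      2 * (k : ℤ) + (j : ℤ) + 1 ≤ (mu G : ℤ) + (mu j : ℤ) + G) := by
    rcases hMbig with h0 | ⟨h1, h2⟩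
    · left; exact_mod_cast h0
    · right; exact ⟨by exact_mod_cast h1, by exact_mod_cast h2⟩
  exact key_arith (m : ℤ) (k : ℤ) (j : ℤ) (J : ℤ) (F : ℤ) (G : ℤ)
    (lam J : ℤ) (mu j : ℤ) (lam F : ℤ) (mu G : ℤ)
    (∑ i ∈ Finset.Icc 1 m, ((lam i : ℤ))) (∑ i ∈ Finset.Icc 1 m, ((mu i : ℤ)))
    (by omega) (by omega) (by omega) (by omega) (by omega)
    (by omega) (by omega) (by omega) (by omega)
    (by omega) (by omega) (by omega) (by omega)
    hLz hMz hSLz hSMz hsumz (by omega)
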